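/- Let h_1, ..., h_{k−1} and M_t be integers such that for every integer vector e ∈ Z^{k−1} with Manhattan weight ||e|| ≤ t, the sums Σ_{i=1}^{k−1} e_i·h_i are all distinct modulo M_t. Assume there exists a code C_r ⊆ S(M_{k,r}) with minimum Kendall τ-distance 2t and size |C_r| ≥ M_t, and let ρ_0, ρ_1, ..., ρ_{M_t−1} be distinct multi-permutations in C_r. Define C = { σ ∗ ρ_j : σ ∈ S_k, Σ_{i=1}^{k−1} (ψ(σ))_{i+1}·h_i ≡ j (mod M_t) } ⊆ S_{k+r}. Then C is a (k+r, k) systematic t-error-correcting code: for every σ ∈ S_k there exists exactly one α ∈ C with α_{↓k} = σ, and distinct codewords of C have Kendall τ-distance at least 2t+1. -/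

import Mathlib

/-- `AdjTrans σ π` : the sequence `π` is obtained from the sequence `σ` by exchanging
two distinct adjacent elements (an adjacent transposition). -/
def AdjTrans (σ π : List ℤ) : Prop :=
  ∃ (l₁ l₂ : List ℤ) (a b : ℤ), a ≠ b ∧ σ = l₁ ++ a :: b :: l₂ ∧ π = l₁ ++ b :: a :: l₂

/-- `StepsTo n σ π` : `π` can be obtained from `σ` by a sequence of `n` adjacent
transpositions. -/
def StepsTo : ℕ → List ℤ → List ℤ → Prop
  | 0 => fun σ π => σ = π
  | n + 1 => fun σ π => ∃ τ, AdjTrans σ τ ∧ StepsTo n τ π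

/-- The Kendall τ-distance between two sequences: the minimum number of adjacent
transpositions needed to transform one into the other. -/
noncomputable def dK (σ π : List ℤ) : ℕ := sInf {n | StepsTo n σ π}

/-- The list `[a, a+1, ..., a+len-1]` of integers. -/
def rangeList (a len : ℕ) : List ℤ := (List.range' a len).map (fun x => (x : ℤ))

/-- The substitution map `T_θ`: the `r`-th occurrence (from the left, `0`-indexed) of a
rank `a` in `σ` is replaced by the `r`-th entry of the list `θ a`. -/
def Tmap (θ : ℤ → List ℤ) (σ : List ℤ) : List ℤ :=
  (List.range σ.length).map (fun j =>
    (θ (σ.getD j 0)).getD ((σ.take j).count (σ.getD j 0)) 0)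

/-- `psiEntry σ a s` : the number of positions in `σ` strictly to the right of the `s`-th
occurrence (`0`-indexed) of `a` in `σ` that hold an element smaller than `a`. -/
def psiEntry (σ : List ℤ) (a : ℤ) (s : ℕ) : ℕ :=
  (σ.drop (((σ.indexesOf a).getD s σ.length) + 1)).countP (fun x => decide (x < a))

/-- The Manhattan distance between two vectors of naturals (presented as lists). -/
def manhattanL (x y : List ℕ) : ℕ :=
  ∑ i ∈ Finset.range (max x.length y.length), ((x.getD i 0 : ℤ) - (y.getD i 0 : ℤ)).natAbs

/-- The Lee distance over `Z_q` between two vectors with entries in `{0, …, q-1}`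
(presented as lists). -/
def leeDistL (q : ℕ) (x y : List ℕ) : ℕ :=
  ∑ i ∈ Finset.range (max x.length y.length),
    min (((x.getD i 0 : ℤ) - (y.getD i 0 : ℤ)).natAbs)
      (q - ((x.getD i 0 : ℤ) - (y.getD i 0 : ℤ)).natAbs)

/-- The Lee distance between two vectors over `ZMod q`. -/
def zmodLee {q N : ℕ} (x y : Fin N → ZMod q) : ℕ :=
  ∑ i, min (x i - y i).val (y i - x i).val

/-- `permList k σ` : `σ` is (an ordering representing) a permutation of `{1, …, k}`. -/
def permList (k : ℕ) (σ : List ℤ) : Prop :=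
  (↑σ : Multiset ℤ) = (↑(rangeList 1 k) : Multiset ℤ)

/-- The multiset `M_{k,r} = {0^k, k+1, …, k+r}`. -/
def Mkr (k r : ℕ) : Multiset ℤ :=
  Multiset.replicate k (0 : ℤ) + (↑(rangeList (k + 1) r) : Multiset ℤ)

/-- `α_{↓k}` : delete from `α` all elements larger than `k`. -/
def restrictTo (k : ℕ) (α : List ℤ) : List ℤ :=
  α.filter (fun x => decide (x ≤ (k : ℤ)))

/-- `α_{k↦0}` : replace in `α` every element of `{1, …, k}` by `0`. -/
def mapToZero (k : ℕ) (α : List ℤ) : List ℤ :=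
  α.map (fun x => if 1 ≤ x ∧ x ≤ (k : ℤ) then 0 else x)

/-- `star σ ρ = σ ∗ ρ` : replace the zeros of `ρ`, from left to right, by the elements
of `σ` in order. -/
def starP : List ℤ → List ℤ → List ℤ
  | _, [] => []
  | σ, x :: ρ' => if x = 0 then σ.headD 0 :: starP σ.tail ρ' else x :: starP σ ρ'

theorem adjTrans_symm {σ π : List ℤ} (h : AdjTrans σ π) : AdjTrans π σ := by
  obtain ⟨l₁, l₂, a, b, hab, h1, h2⟩ := h
  exact ⟨l₁, l₂, b, a, hab.symm, h2, h1⟩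

theorem AdjTrans.perm {σ π : List ℤ} (h : AdjTrans σ π) : σ.Perm π := by
  obtain ⟨l₁, l₂, a, b, _, h1, h2⟩ := h
  subst h1; subst h2
  exact (List.perm_append_left_iff l₁).2 (List.Perm.swap b a l₂)

theorem StepsTo.perm : ∀ {n : ℕ} {σ π : List ℤ}, StepsTo n σ π → σ.Perm π
  | 0, _, _, h => by rw [show StepsTo 0 = fun σ π => σ = π from rfl] at h; exact h ▸ List.Perm.refl _
  | n + 1, σ, π, h => by
      obtain ⟨τ, h1, h2⟩ := h
      exact h1.perm.trans h2.perm

theorem StepsTo.trans : ∀ {m n : ℕ} {σ τ π : List ℤ},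
    StepsTo m σ τ → StepsTo n τ π → StepsTo (m + n) σ π
  | 0, n, σ, τ, π, h1, h2 => by
      have : σ = τ := h1
      rw [Nat.zero_add]; exact this ▸ h2
  | m + 1, n, σ, τ, π, h1, h2 => by
      obtain ⟨ρ, ha, hs⟩ := h1
      rw [Nat.add_right_comm]
      exact ⟨ρ, ha, hs.trans h2⟩

theorem stepsTo_cons {n : ℕ} {σ π : List ℤ} (x : ℤ) (h : StepsTo n σ π) :
    StepsTo n (x :: σ) (x :: π) := by
  induction n generalizing σ with
  | zero => have : σ = π := h; rw [this]; rfl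
  | succ n ih =>
    obtain ⟨τ, ha, hs⟩ := h
    obtain ⟨l₁, l₂, a, b, hab, h1, h2⟩ := ha
    exact ⟨x :: τ, ⟨x :: l₁, l₂, a, b, hab, by rw [h1]; rfl, by rw [h2]; rfl⟩, ih hs⟩

theorem stepsTo_of_perm {σ π : List ℤ} (h : σ.Perm π) : ∃ n, StepsTo n σ π := by
  induction h with
  | nil => exact ⟨0, rfl⟩
  | cons x _ ih => obtain ⟨n, hn⟩ := ih; exact ⟨n, stepsTo_cons x hn⟩
  | swap x y l =>
      by_cases hxy : x = y
      · subst hxy; exact ⟨0, rfl⟩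
      · exact ⟨1, ⟨x :: y :: l, ⟨[], l, y, x, fun h => hxy h.symm, rfl, rfl⟩, rfl⟩⟩
  | trans _ _ ih1 ih2 =>
      obtain ⟨m, hm⟩ := ih1; obtain ⟨n, hn⟩ := ih2
      exact ⟨m + n, hm.trans hn⟩

theorem dK_le {n : ℕ} {σ π : List ℤ} (h : StepsTo n σ π) : dK σ π ≤ n := Nat.sInf_le h

theorem le_dK {c : ℕ} {σ π : List ℤ} (hp : σ.Perm π) (h : ∀ n, StepsTo n σ π → c ≤ n) :
    c ≤ dK σ π := by
  obtain ⟨n, hn⟩ := stepsTo_of_perm hp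
  exact le_csInf ⟨n, hn⟩ h
theorem flatMap_cast (l : List ℕ) : (l.flatMap fun a => [(a:ℤ)]) = l.map (fun x : ℕ => (x:ℤ)) := by
  induction l with
  | nil => rfl
  | cons x l ih => simp_all

theorem rangeList_eq (a len : ℕ) :
    rangeList a len = (List.range' a len).map (fun x : ℕ => (x : ℤ)) := by
  unfold rangeList; simp only [List.map_id']; induction (List.range' a len) <;> simp_all

theorem starP_cons_zero (σ ρ : List ℤ) : starP σ (0 :: ρ) = σ.headD 0 :: starP σ.tail ρ := by
  simp [starP]

theorem starP_cons_ne {x : ℤ} (σ ρ : List ℤ) (hx : x ≠ 0) : starP σ (x :: ρ) = x :: starP σ ρ := by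
  simp [starP, hx]

theorem rangeList_nodup (a len : ℕ) : (rangeList a len).Nodup := by
  rw [rangeList_eq]
  exact (List.nodup_range' (s := a) (n := len)).map (fun _ _ h => Int.natCast_inj.mp h)

theorem mem_rangeList {a len : ℕ} {x : ℤ} :
    x ∈ rangeList a len ↔ (a : ℤ) ≤ x ∧ x < (a : ℤ) + len := by
  rw [rangeList_eq, List.mem_map]
  constructor
  · rintro ⟨y, hy, rfl⟩
    rw [List.mem_range'_1] at hy
    exact ⟨by exact_mod_cast hy.1, by push_cast; exact_mod_cast hy.2⟩
  · rintro ⟨h1, h2⟩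
    refine ⟨x.toNat, List.mem_range'_1.mpr ⟨by omega, by omega⟩, by omega⟩

theorem rangeList_split (k r : ℕ) :
    rangeList 1 k ++ rangeList (k + 1) r = rangeList 1 (k + r) := by
  have h : List.range' 1 k ++ List.range' (k + 1) r = List.range' 1 (k + r) := by
    have := List.range'_append (s := 1) (m := k) (n := r) (step := 1)
    rw [Nat.one_mul, Nat.add_comm 1 k] at this
    exact this
  rw [rangeList_eq, rangeList_eq, rangeList_eq, ← h, List.map_append]

theorem permList_length {k : ℕ} {σ : List ℤ} (h : permList k σ) : σ.length = k := by
  have := congrArg Multiset.card h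
  simpa [rangeList_eq, Multiset.coe_card, List.length_map, List.length_range'] using this

theorem permList_nodup {k : ℕ} {σ : List ℤ} (h : permList k σ) : σ.Nodup := by
  have : Multiset.Nodup (↑σ : Multiset ℤ) := by
    rw [permList] at h; rw [h]; exact (rangeList_nodup 1 k)
  exact this

theorem permList_mem {k : ℕ} {σ : List ℤ} (h : permList k σ) {x : ℤ} :
    x ∈ σ ↔ 1 ≤ x ∧ x ≤ (k : ℤ) := by
  have hm : x ∈ σ ↔ x ∈ rangeList 1 k := by
    constructor <;> intro hx
    · have h2 : x ∈ (↑σ : Multiset ℤ) := hx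
      rw [permList] at h; rw [h] at h2; exact h2
    · have h2 : x ∈ (↑(rangeList 1 k) : Multiset ℤ) := hx
      rw [← h] at h2; exact h2
  rw [hm, mem_rangeList]
  omega

theorem perm_of_permList {k : ℕ} {σ σ' : List ℤ} (h : permList k σ) (h' : permList k σ') :
    σ.Perm σ' := by
  rw [permList] at h h'
  exact Multiset.coe_eq_coe.mp (h.trans h'.symm)

theorem Mkr_count {k r : ℕ} {ρ : List ℤ} (h : (↑ρ : Multiset ℤ) = Mkr k r) :
    ρ.count 0 = k := by
  have h2 := congrArg (Multiset.count 0) h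
  rw [Multiset.coe_count] at h2
  rw [h2, Mkr, Multiset.count_add, Multiset.count_replicate]
  have h3 : Multiset.count 0 (↑(rangeList (k+1) r) : Multiset ℤ) = 0 := by
    rw [Multiset.count_eq_zero]
    intro hmem
    have : (0:ℤ) ∈ rangeList (k+1) r := hmem
    rw [mem_rangeList] at this
    omega
  simp [h3]

theorem Mkr_mem {k r : ℕ} {ρ : List ℤ} (h : (↑ρ : Multiset ℤ) = Mkr k r) {x : ℤ}
    (hx : x ∈ ρ) : x = 0 ∨ (k : ℤ) < x := by
  have h2 : x ∈ Mkr k r := by rw [← h]; exact hx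
  rw [Mkr, Multiset.mem_add] at h2
  rcases h2 with h1 | h2
  · left; exact (Multiset.eq_of_mem_replicate h1)
  · right
    have h3 : x ∈ rangeList (k+1) r := h2
    rw [mem_rangeList] at h3
    push_cast at h3 ⊢; omega

theorem starP_perm : ∀ (ρ σ : List ℤ), ρ.count 0 = σ.length →
    (starP σ ρ).Perm (σ ++ ρ.filter (fun x => x ≠ 0))
  | [], σ, h => by
      simp only [List.count_nil] at h
      have : σ = [] := List.eq_nil_of_length_eq_zero h.symm
      subst this; simp [starP]
  | x :: ρ', σ, h => by
      by_cases hx : x = 0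
      · subst hx
        rw [List.count_cons_self] at h
        obtain ⟨s, σ', rfl⟩ : ∃ s σ', σ = s :: σ' := by
          cases σ with
          | nil => simp at h
          | cons s σ' => exact ⟨s, σ', rfl⟩
        rw [starP_cons_zero, List.headD_cons, List.tail_cons]
        have ih := starP_perm ρ' σ' (by simpa using h)
        rw [List.filter_cons, if_neg (by simp)]
        exact ih.cons s
      · rw [starP_cons_ne σ ρ' hx]
        rw [List.count_cons_of_ne (by exact fun hc => hx hc)] at h
        have ih := starP_perm ρ' σ h
        rw [List.filter_cons, if_pos (by simpa using hx)]
        exact (ih.cons x).trans List.perm_middle.symm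

theorem restrictTo_starP : ∀ (ρ σ : List ℤ) (k : ℕ), ρ.count 0 = σ.length →
    (∀ x ∈ σ, x ≤ (k : ℤ)) → (∀ x ∈ ρ, x = 0 ∨ (k : ℤ) < x) →
    restrictTo k (starP σ ρ) = σ
  | [], σ, k, h, _, _ => by
      simp only [List.count_nil] at h
      have : σ = [] := List.eq_nil_of_length_eq_zero h.symm
      subst this; rfl
  | x :: ρ', σ, k, h, hσ, hρ => by
      by_cases hx : x = 0
      · subst hx
        rw [List.count_cons_self] at h
        obtain ⟨s, σ', rfl⟩ : ∃ s σ', σ = s :: σ' := by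
          cases σ with
          | nil => simp at h
          | cons s σ' => exact ⟨s, σ', rfl⟩
        rw [starP_cons_zero, List.headD_cons, List.tail_cons]
        rw [restrictTo, List.filter_cons, if_pos (by simpa using hσ s (by simp))]
        have ih := restrictTo_starP ρ' σ' k (by simpa using h)
          (fun y hy => hσ y (by simp [hy])) (fun y hy => hρ y (by simp [hy]))
        rw [show List.filter (fun x => decide (x ≤ (k:ℤ))) (starP σ' ρ') = restrictTo k (starP σ' ρ') from rfl, ih]
      · rw [starP_cons_ne σ ρ' hx]
        rw [List.count_cons_of_ne (by exact fun hc => hx hc)] at h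
        have hxk : (k : ℤ) < x := by
          rcases hρ x (by simp) with h0 | hk
          · exact absurd h0 hx
          · exact hk
        rw [restrictTo, List.filter_cons, if_neg (by simp; omega)]
        exact restrictTo_starP ρ' σ k h hσ (fun y hy => hρ y (by simp [hy]))

theorem mapToZero_starP : ∀ (ρ σ : List ℤ) (k : ℕ), ρ.count 0 = σ.length →
    (∀ x ∈ σ, 1 ≤ x ∧ x ≤ (k : ℤ)) → (∀ x ∈ ρ, x = 0 ∨ (k : ℤ) < x) →
    mapToZero k (starP σ ρ) = ρ
  | [], σ, k, h, _, _ => by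
      simp only [List.count_nil] at h
      have : σ = [] := List.eq_nil_of_length_eq_zero h.symm
      subst this; rfl
  | x :: ρ', σ, k, h, hσ, hρ => by
      by_cases hx : x = 0
      · subst hx
        rw [List.count_cons_self] at h
        obtain ⟨s, σ', rfl⟩ : ∃ s σ', σ = s :: σ' := by
          cases σ with
          | nil => simp at h
          | cons s σ' => exact ⟨s, σ', rfl⟩
        rw [starP_cons_zero, List.headD_cons, List.tail_cons]
        rw [mapToZero, List.map_cons, if_pos (hσ s (by simp))]
        have ih := mapToZero_starP ρ' σ' k (by simpa using h)
          (fun y hy => hσ y (by simp [hy])) (fun y hy => hρ y (by simp [hy]))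
        rw [show List.map _ (starP σ' ρ') = mapToZero k (starP σ' ρ') from rfl, ih]
      · rw [starP_cons_ne σ ρ' hx]
        rw [List.count_cons_of_ne (by exact fun hc => hx hc)] at h
        have hxk : (k : ℤ) < x := by
          rcases hρ x (by simp) with h0 | hk
          · exact absurd h0 hx
          · exact hk
        rw [mapToZero, List.map_cons, if_neg (by push_neg; intro; omega)]
        have ih := mapToZero_starP ρ' σ k h hσ (fun y hy => hρ y (by simp [hy]))
        rw [show List.map _ (starP σ ρ') = mapToZero k (starP σ ρ') from rfl, ih]
theorem proj_step {k : ℕ} {α β : List ℤ} (hpos : ∀ x ∈ α, 1 ≤ x) (h : AdjTrans α β) :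
    (AdjTrans (restrictTo k α) (restrictTo k β) ∧ mapToZero k α = mapToZero k β) ∨
    (restrictTo k α = restrictTo k β ∧ AdjTrans (mapToZero k α) (mapToZero k β)) := by
  obtain ⟨l₁, l₂, a, b, hab, rfl, rfl⟩ := h
  have ha1 : 1 ≤ a := hpos a (by simp)
  have hb1 : 1 ≤ b := hpos b (by simp)
  by_cases hak : a ≤ (k : ℤ) <;> by_cases hbk : b ≤ (k : ℤ)
  · left
    constructor
    · refine ⟨List.filter (fun x => decide (x ≤ (k:ℤ))) l₁,
        List.filter (fun x => decide (x ≤ (k:ℤ))) l₂, a, b, hab, ?_, ?_⟩ <;>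
        simp [restrictTo, List.filter_append, List.filter_cons, hak, hbk]
    · simp [mapToZero, List.map_append, List.map_cons, ha1, hb1, hak, hbk]
  · right
    constructor
    · simp [restrictTo, List.filter_append, List.filter_cons, hak, hbk]
    · refine ⟨List.map (fun x => if 1 ≤ x ∧ x ≤ (k:ℤ) then 0 else x) l₁,
        List.map (fun x => if 1 ≤ x ∧ x ≤ (k:ℤ) then 0 else x) l₂, 0, b, ?_, ?_, ?_⟩
      · omega
      · simp [mapToZero, List.map_append, List.map_cons, ha1, hak, hbk]
      · simp [mapToZero, List.map_append, List.map_cons, ha1, hak, hbk]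
  · right
    constructor
    · simp [restrictTo, List.filter_append, List.filter_cons, hak, hbk]
    · refine ⟨List.map (fun x => if 1 ≤ x ∧ x ≤ (k:ℤ) then 0 else x) l₁,
        List.map (fun x => if 1 ≤ x ∧ x ≤ (k:ℤ) then 0 else x) l₂, a, 0, ?_, ?_, ?_⟩
      · omega
      · simp [mapToZero, List.map_append, List.map_cons, hb1, hak, hbk]
      · simp [mapToZero, List.map_append, List.map_cons, hb1, hak, hbk]
  · right
    constructor
    · simp [restrictTo, List.filter_append, List.filter_cons, hak, hbk]
    · refine ⟨List.map (fun x => if 1 ≤ x ∧ x ≤ (k:ℤ) then 0 else x) l₁,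
        List.map (fun x => if 1 ≤ x ∧ x ≤ (k:ℤ) then 0 else x) l₂, a, b, hab, ?_, ?_⟩ <;>
        simp [mapToZero, List.map_append, List.map_cons, hak, hbk]

theorem proj_steps {k : ℕ} : ∀ {n : ℕ} {α β : List ℤ}, (∀ x ∈ α, 1 ≤ x) → StepsTo n α β →
    ∃ m₁ m₂, m₁ + m₂ ≤ n ∧ StepsTo m₁ (restrictTo k α) (restrictTo k β) ∧
      StepsTo m₂ (mapToZero k α) (mapToZero k β) := by
  intro n
  induction n with
  | zero =>
    intro α β _ h
    have : α = β := h
    exact ⟨0, 0, by omega, by rw [this]; rfl, by rw [this]; rfl⟩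
  | succ n ih =>
    intro α β hpos h
    obtain ⟨τ, ha, hs⟩ := h
    have hposτ : ∀ x ∈ τ, 1 ≤ x := fun x hx => hpos x (ha.perm.mem_iff.mpr hx)
    obtain ⟨m₁, m₂, hm, h1, h2⟩ := ih hposτ hs
    rcases proj_step hpos ha with ⟨hA, hE⟩ | ⟨hE, hA⟩
    · exact ⟨m₁ + 1, m₂, by omega, ⟨_, hA, h1⟩, by rw [hE]; exact h2⟩
    · exact ⟨m₁, m₂ + 1, by omega, by rw [hE]; exact h1, ⟨_, hA, h2⟩⟩
theorem indexesOf_cons (x a : ℤ) (l : List ℤ) :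
    (x :: l).indexesOf a =
      bif x == a then 0 :: (l.indexesOf a).map (· + 1) else (l.indexesOf a).map (· + 1) := by
  rw [List.indexesOf, List.idxsOf_cons, List.idxsOf_start (s := 1)]
  cases x == a <;> rfl

theorem indexesOf_eq_nil {l : List ℤ} {a : ℤ} (h : a ∉ l) : l.indexesOf a = [] := by
  induction l with
  | nil => rfl
  | cons x l ih =>
    rw [indexesOf_cons]
    have hxa : (x == a) = false := by
      simp only [beq_eq_false_iff_ne]
      intro hc; exact h (by rw [hc]; simp)
    rw [hxa, cond_false, ih (fun hc => h (List.mem_cons_of_mem _ hc))]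
    rfl

theorem indexesOf_ne_nil {l : List ℤ} {a : ℤ} (h : a ∈ l) : l.indexesOf a ≠ [] := by
  induction l with
  | nil => simp at h
  | cons x l ih =>
    rw [indexesOf_cons]
    by_cases hxa : x = a
    · rw [show (x == a) = true by simpa using hxa, cond_true]; simp
    · rw [show (x == a) = false by simpa using hxa, cond_false]
      have hal : a ∈ l := by
        rcases List.mem_cons.mp h with h1 | h1
        · exact absurd h1.symm hxa
        · exact h1
      have h2 := ih hal
      simp only [ne_eq, List.map_eq_nil_iff]
      exact h2

theorem head_indexesOf {l₁ l₂ : List ℤ} {a : ℤ} (h : a ∉ l₁) (d : ℕ) :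
    ((l₁ ++ a :: l₂).indexesOf a).getD 0 d = l₁.length := by
  induction l₁ with
  | nil =>
    rw [List.nil_append, indexesOf_cons, show (a == a) = true by simp, cond_true]
    rfl
  | cons x l₁ ih =>
    have hxa : x ≠ a := fun hc => h (by rw [hc]; simp)
    rw [List.cons_append, indexesOf_cons, show (x == a) = false by simpa using hxa, cond_false]
    have hne := indexesOf_ne_nil (show a ∈ l₁ ++ a :: l₂ by simp)
    obtain ⟨y, ys, hy⟩ := List.exists_cons_of_ne_nil hne
    rw [hy, List.map_cons, List.getD_cons_zero]
    have := ih (fun hc => h (List.mem_cons_of_mem _ hc))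
    rw [hy, List.getD_cons_zero] at this
    rw [this]
    rfl

theorem psiEntry_split {l₁ l₂ : List ℤ} {a : ℤ} (h : a ∉ l₁) :
    psiEntry (l₁ ++ a :: l₂) a 0 = l₂.countP (fun x => decide (x < a)) := by
  rw [psiEntry, head_indexesOf h]
  congr 1
  have h1 : l₁.length + 1 = (l₁ ++ [a]).length := by simp
  rw [h1, show l₁ ++ a :: l₂ = (l₁ ++ [a]) ++ l₂ by simp, List.drop_left]

theorem psiEntry_notMem {σ : List ℤ} {a : ℤ} (h : a ∉ σ) : psiEntry σ a 0 = 0 := by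
  rw [psiEntry, indexesOf_eq_nil h]
  rw [show ([] : List ℕ).getD 0 σ.length = σ.length from rfl]
  rw [List.drop_eq_nil_of_le (by omega)]
  rfl

theorem psiEntry_adj {σ τ : List ℤ} (hnd : σ.Nodup) (h : AdjTrans σ τ) :
    ∃ c : ℤ, (∀ v, v ≠ c → psiEntry σ v 0 = psiEntry τ v 0) ∧
      ((psiEntry σ c 0 : ℤ) - (psiEntry τ c 0 : ℤ)).natAbs ≤ 1 := by
  obtain ⟨l₁, l₂, a, b, hab, rfl, rfl⟩ := h
  have hndτ : (l₁ ++ b :: a :: l₂).Nodup := (AdjTrans.perm ⟨l₁, l₂, a, b, hab, rfl, rfl⟩).nodup hnd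
  -- basic nodup facts
  rw [List.nodup_append] at hnd
  obtain ⟨hnd1, hnd2, hdisj⟩ := hnd
  rw [List.nodup_cons] at hnd2
  obtain ⟨hab2, hnd2⟩ := hnd2
  rw [List.nodup_cons] at hnd2
  obtain ⟨hbl2, hnd2⟩ := hnd2
  have hal2 : a ∉ l₂ := fun hc => hab2 (List.mem_cons_of_mem _ hc)
  have hal1 : a ∉ l₁ := fun hc => hdisj _ hc _ (by simp) rfl
  have hbl1 : b ∉ l₁ := fun hc => hdisj _ hc _ (by simp) rfl
  -- the key computations for a and b
  have hA1 : psiEntry (l₁ ++ a :: b :: l₂) a 0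
      = (b :: l₂).countP (fun x => decide (x < a)) := psiEntry_split hal1
  have hA2 : psiEntry (l₁ ++ b :: a :: l₂) a 0
      = l₂.countP (fun x => decide (x < a)) := by
    have := psiEntry_split (l₁ := l₁ ++ [b]) (l₂ := l₂) (a := a)
      (by simp; exact ⟨hal1, hab⟩)
    simpa using this
  have hB1 : psiEntry (l₁ ++ a :: b :: l₂) b 0
      = l₂.countP (fun x => decide (x < b)) := by
    have := psiEntry_split (l₁ := l₁ ++ [a]) (l₂ := l₂) (a := b)
      (by simp; exact ⟨hbl1, fun hc => hab hc.symm⟩)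
    simpa using this
  have hB2 : psiEntry (l₁ ++ b :: a :: l₂) b 0
      = (a :: l₂).countP (fun x => decide (x < b)) := psiEntry_split hbl1
  -- other values
  have hother : ∀ v, v ≠ a → v ≠ b →
      psiEntry (l₁ ++ a :: b :: l₂) v 0 = psiEntry (l₁ ++ b :: a :: l₂) v 0 := by
    intro v hva hvb
    by_cases hv : v ∈ l₁ ++ a :: b :: l₂
    · rcases List.mem_append.mp hv with hv1 | hv2
      · -- v ∈ l₁
        obtain ⟨m₁, m₂, rfl⟩ := List.append_of_mem hv1
        have hvm₁ : v ∉ m₁ := by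
          rw [List.nodup_append] at hnd1
          exact fun hc => hnd1.2.2 _ hc _ (by simp) rfl
        rw [show (m₁ ++ v :: m₂) ++ a :: b :: l₂ = m₁ ++ v :: (m₂ ++ a :: b :: l₂) by simp,
          psiEntry_split hvm₁,
          show (m₁ ++ v :: m₂) ++ b :: a :: l₂ = m₁ ++ v :: (m₂ ++ b :: a :: l₂) by simp,
          psiEntry_split hvm₁]
        simp only [List.countP_append, List.countP_cons]
        omega
      · -- v ∈ a :: b :: l₂, so v ∈ l₂
        have hv2' : v ∈ l₂ := by
          rcases List.mem_cons.mp hv2 with h1 | h1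
          · exact absurd h1 hva
          rcases List.mem_cons.mp h1 with h2 | h2
          · exact absurd h2 hvb
          · exact h2
        obtain ⟨m₁, m₂, rfl⟩ := List.append_of_mem hv2'
        have hvm : v ∉ l₁ ++ a :: b :: m₁ := by
          intro hc
          rcases List.mem_append.mp hc with h1 | h1
          · exact hdisj _ h1 _ (by simp) rfl
          rcases List.mem_cons.mp h1 with h2 | h2
          · exact hva h2
          rcases List.mem_cons.mp h2 with h3 | h3
          · exact hvb h3
          · rw [List.nodup_append] at hnd2
            exact hnd2.2.2 _ h3 _ (by simp) rfl
        have hvm' : v ∉ l₁ ++ b :: a :: m₁ := by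
          intro hc; apply hvm; simp at hc ⊢; tauto
        rw [show l₁ ++ a :: b :: (m₁ ++ v :: m₂) = (l₁ ++ a :: b :: m₁) ++ v :: m₂ by simp,
          psiEntry_split hvm,
          show l₁ ++ b :: a :: (m₁ ++ v :: m₂) = (l₁ ++ b :: a :: m₁) ++ v :: m₂ by simp,
          psiEntry_split hvm']
    · have hv' : v ∉ l₁ ++ b :: a :: l₂ := by
        intro hc; apply hv
        rcases List.mem_append.mp hc with h1 | h1
        · exact List.mem_append.mpr (Or.inl h1)
        · apply List.mem_append.mpr; right
          rcases List.mem_cons.mp h1 with h2 | h2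
          · rw [h2]; simp
          rcases List.mem_cons.mp h2 with h3 | h3
          · rw [h3]; simp
          · simp [h3]
      rw [psiEntry_notMem hv, psiEntry_notMem hv']
  -- put together
  rcases lt_or_gt_of_ne hab with hlt | hgt
  · refine ⟨b, fun v hv => ?_, ?_⟩
    · by_cases hva : v = a
      · subst hva
        rw [hA1, hA2, List.countP_cons, if_neg (by simp; omega)]
        omega
      · exact hother v hva hv
    · rw [hB1, hB2, List.countP_cons, if_pos (by simp [hlt])]
      simp
  · refine ⟨a, fun v hv => ?_, ?_⟩
    · by_cases hvb : v = b
      · subst hvb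
        rw [hB1, hB2, List.countP_cons, if_neg (by simp; omega)]
        omega
      · exact hother v hv hvb
    · rw [hA1, hA2, List.countP_cons, if_pos (by simp; omega)]
      simp
theorem psi_manhattan_step (k : ℕ) {σ τ : List ℤ} (hnd : σ.Nodup) (h : AdjTrans σ τ) :
    (∑ i ∈ Finset.Icc 1 (k-1),
      ((psiEntry σ ((i:ℤ)+1) 0 : ℤ) - (psiEntry τ ((i:ℤ)+1) 0 : ℤ)).natAbs) ≤ 1 := by
  obtain ⟨c, hc, hc1⟩ := psiEntry_adj hnd h
  by_cases hex : ∃ i₀ ∈ Finset.Icc 1 (k-1), ((i₀:ℤ)+1) = c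
  · obtain ⟨i₀, hi₀, hci⟩ := hex
    rw [Finset.sum_eq_single_of_mem i₀ hi₀ ?_]
    · rw [hci]; exact hc1
    · intro j _ hji
      have : ((j:ℤ)+1) ≠ c := by
        intro hcj; apply hji
        have : (j:ℤ) = (i₀:ℤ) := by omega
        exact_mod_cast this
      rw [hc _ this]; simp
  · rw [Finset.sum_eq_zero]
    · omega
    · intro i hi
      have : ((i:ℤ)+1) ≠ c := fun hcc => hex ⟨i, hi, hcc⟩
      rw [hc _ this]; simp

theorem psi_manhattan_le (k : ℕ) : ∀ {n : ℕ} {σ σ' : List ℤ}, σ.Nodup → StepsTo n σ σ' →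
    (∑ i ∈ Finset.Icc 1 (k-1),
      ((psiEntry σ ((i:ℤ)+1) 0 : ℤ) - (psiEntry σ' ((i:ℤ)+1) 0 : ℤ)).natAbs) ≤ n := by
  intro n
  induction n with
  | zero =>
    intro σ σ' _ h
    have : σ = σ' := h
    subst this
    rw [Finset.sum_eq_zero] <;> simp
  | succ n ih =>
    intro σ σ' hnd h
    obtain ⟨τ, ha, hs⟩ := h
    have hτ : τ.Nodup := ha.perm.nodup hnd
    have h1 := psi_manhattan_step k hnd ha
    have h2 := ih hτ hs
    have h3 : (∑ i ∈ Finset.Icc 1 (k-1),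
        ((psiEntry σ ((i:ℤ)+1) 0 : ℤ) - (psiEntry σ' ((i:ℤ)+1) 0 : ℤ)).natAbs) ≤
        (∑ i ∈ Finset.Icc 1 (k-1),
          ((psiEntry σ ((i:ℤ)+1) 0 : ℤ) - (psiEntry τ ((i:ℤ)+1) 0 : ℤ)).natAbs) +
        (∑ i ∈ Finset.Icc 1 (k-1),
          ((psiEntry τ ((i:ℤ)+1) 0 : ℤ) - (psiEntry σ' ((i:ℤ)+1) 0 : ℤ)).natAbs) := by
      rw [← Finset.sum_add_distrib]
      apply Finset.sum_le_sum
      intro i _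
      rw [show (psiEntry σ ((i:ℤ)+1) 0 : ℤ) - (psiEntry σ' ((i:ℤ)+1) 0 : ℤ) =
        ((psiEntry σ ((i:ℤ)+1) 0 : ℤ) - (psiEntry τ ((i:ℤ)+1) 0 : ℤ)) +
        ((psiEntry τ ((i:ℤ)+1) 0 : ℤ) - (psiEntry σ' ((i:ℤ)+1) 0 : ℤ)) by ring]
      exact Int.natAbs_add_le _ _
    omega

theorem psiEntry_erase {l₁ l₂ : List ℤ} {K v : ℤ} (hnd : (l₁ ++ K :: l₂).Nodup)
    (hv : v ∈ l₁ ++ l₂) (hvK : ¬ K < v) :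
    psiEntry (l₁ ++ K :: l₂) v 0 = psiEntry (l₁ ++ l₂) v 0 := by
  rw [List.nodup_append] at hnd
  obtain ⟨hnd1, hnd2, hdisj⟩ := hnd
  rw [List.nodup_cons] at hnd2
  obtain ⟨hKl2, hnd2⟩ := hnd2
  rcases List.mem_append.mp hv with h1 | h2
  · obtain ⟨m₁, m₂, rfl⟩ := List.append_of_mem h1
    have hvm₁ : v ∉ m₁ := by
      rw [List.nodup_append] at hnd1
      exact fun hc => hnd1.2.2 _ hc _ (by simp) rfl
    rw [show (m₁ ++ v :: m₂) ++ K :: l₂ = m₁ ++ v :: (m₂ ++ K :: l₂) by simp,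
      psiEntry_split hvm₁,
      show (m₁ ++ v :: m₂) ++ l₂ = m₁ ++ v :: (m₂ ++ l₂) by simp,
      psiEntry_split hvm₁]
    simp only [List.countP_append, List.countP_cons]
    have : ¬ (decide (K < v) = true) := by simpa using hvK
    simp [this]
  · obtain ⟨m₁, m₂, rfl⟩ := List.append_of_mem h2
    have hvK2 : v ≠ K := fun hc => hKl2 (hc ▸ h2)
    have hvm : v ∉ l₁ ++ K :: m₁ := by
      intro hc
      rcases List.mem_append.mp hc with hc1 | hc1
      · exact hdisj _ hc1 _ (by simp) rfl
      rcases List.mem_cons.mp hc1 with hc2 | hc2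
      · exact hvK2 hc2
      · rw [List.nodup_append] at hnd2
        exact hnd2.2.2 _ hc2 _ (by simp) rfl
    have hvm2 : v ∉ l₁ ++ m₁ := by
      intro hc; apply hvm; simp at hc ⊢; tauto
    rw [show l₁ ++ K :: (m₁ ++ v :: m₂) = (l₁ ++ K :: m₁) ++ v :: m₂ by simp,
      psiEntry_split hvm,
      show l₁ ++ (m₁ ++ v :: m₂) = (l₁ ++ m₁) ++ v :: m₂ by simp,
      psiEntry_split hvm2]

theorem psi_inj : ∀ (k : ℕ) (σ σ' : List ℤ), permList k σ → permList k σ' →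
    (∀ v : ℤ, 2 ≤ v → v ≤ (k:ℤ) → psiEntry σ v 0 = psiEntry σ' v 0) → σ = σ' := by
  intro k
  induction k with
  | zero =>
    intro σ σ' h h' _
    have h1 := permList_length h
    have h2 := permList_length h'
    rw [List.length_eq_zero_iff] at h1 h2
    rw [h1, h2]
  | succ k ih =>
    intro σ σ' h h' hψ
    by_cases hk0 : k = 0
    · subst hk0
      obtain ⟨x, hx⟩ := List.length_eq_one_iff.mp (permList_length h)
      obtain ⟨y, hy⟩ := List.length_eq_one_iff.mp (permList_length h')
      have hx1 : x = 1 := by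
        have := (permList_mem h (x := x)).mp (by rw [hx]; simp)
        push_cast at this; omega
      have hy1 : y = 1 := by
        have := (permList_mem h' (x := y)).mp (by rw [hy]; simp)
        push_cast at this; omega
      rw [hx, hy, hx1, hy1]
    -- now k ≥ 1
    have hK : ((k:ℤ)+1) ∈ σ := (permList_mem h).mpr ⟨by omega, by push_cast; omega⟩
    have hK' : ((k:ℤ)+1) ∈ σ' := (permList_mem h').mpr ⟨by omega, by push_cast; omega⟩
    obtain ⟨l₁, l₂, rfl⟩ := List.append_of_mem hK
    obtain ⟨l₁', l₂', rfl⟩ := List.append_of_mem hK'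
    have hnd := permList_nodup h
    have hnd' := permList_nodup h'
    have hKl₁ : ((k:ℤ)+1) ∉ l₁ := by
      rw [List.nodup_append] at hnd
      exact fun hc => hnd.2.2 _ hc _ (by simp) rfl
    have hKl₁' : ((k:ℤ)+1) ∉ l₁' := by
      rw [List.nodup_append] at hnd'
      exact fun hc => hnd'.2.2 _ hc _ (by simp) rfl
    have hKl₂ : ((k:ℤ)+1) ∉ l₂ := by
      rw [List.nodup_append] at hnd
      exact (List.nodup_cons.mp hnd.2.1).1
    have hKl₂' : ((k:ℤ)+1) ∉ l₂' := by
      rw [List.nodup_append] at hnd'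
      exact (List.nodup_cons.mp hnd'.2.1).1
    -- psiEntry at K is the length of the tail
    have hlen : ∀ (m₁ m₂ : List ℤ), permList (k+1) (m₁ ++ ((k:ℤ)+1) :: m₂) →
        ((k:ℤ)+1) ∉ m₁ → ((k:ℤ)+1) ∉ m₂ →
        psiEntry (m₁ ++ ((k:ℤ)+1) :: m₂) ((k:ℤ)+1) 0 = m₂.length := by
      intro m₁ m₂ hm hm1 hm2
      rw [psiEntry_split hm1]
      rw [List.countP_eq_length]
      intro x hx
      have hxm : x ∈ m₁ ++ ((k:ℤ)+1) :: m₂ := by simp [hx]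
      have := (permList_mem hm).mp hxm
      have hxK : x ≠ (k:ℤ)+1 := fun hc => hm2 (hc ▸ hx)
      simp only [decide_eq_true_eq]
      push_cast at this
      omega
    have hL : l₂.length = l₂'.length := by
      rw [← hlen l₁ l₂ h hKl₁ hKl₂, ← hlen l₁' l₂' h' hKl₁' hKl₂']
      exact hψ ((k:ℤ)+1) (by omega) (by push_cast; omega)
    have hL1 : l₁.length = l₁'.length := by
      have e1 := permList_length h
      have e2 := permList_length h'
      simp only [List.length_append, List.length_cons] at e1 e2
      omega
    -- erased lists are permutations of 1..k
    have hrange : (↑(rangeList 1 (k+1)) : Multiset ℤ)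
        = ((k:ℤ)+1) ::ₘ (↑(rangeList 1 k) : Multiset ℤ) := by
      have h1 : rangeList 1 k ++ rangeList (k+1) 1 = rangeList 1 (k+1) := rangeList_split k 1
      have h2 : rangeList (k+1) 1 = [((k:ℤ)+1)] := by
        rw [rangeList_eq, List.range'_one]
        simp
      rw [← h1, h2, ← Multiset.coe_add]
      rw [show ((([((k:ℤ)+1)]) : List ℤ) : Multiset ℤ) = ((k:ℤ)+1) ::ₘ 0 from rfl]
      rw [Multiset.add_cons]
      simp
    have herase : ∀ (m₁ m₂ : List ℤ), permList (k+1) (m₁ ++ ((k:ℤ)+1) :: m₂) →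
        permList k (m₁ ++ m₂) := by
      intro m₁ m₂ hm
      rw [permList] at hm ⊢
      have hp : (m₁ ++ (((k:ℤ)+1) :: m₂)).Perm ((((k:ℤ)+1)) :: (m₁ ++ m₂)) :=
        List.perm_middle
      have h3 : (↑((((k:ℤ)+1)) :: (m₁ ++ m₂)) : Multiset ℤ) = ↑(rangeList 1 (k+1)) := by
        rw [← Multiset.coe_eq_coe.mpr hp]; exact hm
      rw [hrange, ← Multiset.cons_coe] at h3
      exact (Multiset.cons_inj_right _).mp h3
    have he1 := herase l₁ l₂ h
    have he2 := herase l₁' l₂' h'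
    -- transfer the psi hypothesis
    have hψe : ∀ v : ℤ, 2 ≤ v → v ≤ (k:ℤ) →
        psiEntry (l₁ ++ l₂) v 0 = psiEntry (l₁' ++ l₂') v 0 := by
      intro v h2v hvk
      have hv1 : v ∈ l₁ ++ l₂ := (permList_mem he1).mpr ⟨by omega, hvk⟩
      have hv2 : v ∈ l₁' ++ l₂' := (permList_mem he2).mpr ⟨by omega, hvk⟩
      rw [← psiEntry_erase hnd hv1 (by omega), ← psiEntry_erase hnd' hv2 (by omega)]
      exact hψ v h2v (by push_cast; omega)
    have heq := ih (l₁ ++ l₂) (l₁' ++ l₂') he1 he2 hψe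
    obtain ⟨rfl, rfl⟩ := List.append_inj heq hL1
    rfl
theorem split_budget (d : ℕ → ℤ) (s : Finset ℕ) :
    ∀ b : ℕ, ∃ e : ℕ → ℤ,
      (∑ i ∈ s, (e i).natAbs) = min b (∑ i ∈ s, (d i).natAbs) ∧
      (∑ i ∈ s, (e i).natAbs) + (∑ i ∈ s, (d i - e i).natAbs) = ∑ i ∈ s, (d i).natAbs := by
  induction s using Finset.induction_on with
  | empty => intro b; exact ⟨0, by simp, by simp⟩
  | @insert a s hnotin ih =>
    intro b
    obtain ⟨e₀, he1, he2⟩ := ih (b - min b (d a).natAbs)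
    set c := min b (d a).natAbs with hc
    set v : ℤ := if 0 ≤ d a then (c:ℤ) else -(c:ℤ) with hv
    have hs1 : (∑ j ∈ s, ((if j = a then v else e₀ j)).natAbs) = ∑ j ∈ s, (e₀ j).natAbs :=
      Finset.sum_congr rfl fun j hj => by rw [if_neg (fun h2 : j = a => hnotin (h2 ▸ hj))]
    have hs2 : (∑ j ∈ s, ((d j - if j = a then v else e₀ j)).natAbs)
        = ∑ j ∈ s, (d j - e₀ j).natAbs :=
      Finset.sum_congr rfl fun j hj => by rw [if_neg (fun h2 : j = a => hnotin (h2 ▸ hj))]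
    have hA : v.natAbs = c := by rw [hv]; split_ifs <;> simp
    have hB : (d a - v).natAbs = (d a).natAbs - c := by
      have hcle : c ≤ (d a).natAbs := by omega
      rw [hv]; split_ifs <;> omega
    refine ⟨fun j => if j = a then v else e₀ j, ?_, ?_⟩
    · show (∑ j ∈ insert a s, ((if j = a then v else e₀ j)).natAbs) = _
      rw [Finset.sum_insert hnotin, Finset.sum_insert hnotin,
        show (if a = a then v else e₀ a) = v from if_pos rfl, hs1, hA]
      omega
    · show (∑ j ∈ insert a s, ((if j = a then v else e₀ j)).natAbs) +
        (∑ j ∈ insert a s, ((d j - if j = a then v else e₀ j)).natAbs) = _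
      rw [Finset.sum_insert hnotin, Finset.sum_insert hnotin, Finset.sum_insert hnotin,
        show (if a = a then v else e₀ a) = v from if_pos rfl, hs1, hs2, hA, hB]
      omega

theorem split_two (t : ℕ) (d : ℕ → ℤ) (s : Finset ℕ)
    (hd : (∑ i ∈ s, (d i).natAbs) ≤ 2 * t) :
    ∃ e e' : ℕ → ℤ, (∑ i ∈ s, (e i).natAbs) ≤ t ∧ (∑ i ∈ s, (e' i).natAbs) ≤ t ∧
      ∀ i, e i - e' i = d i := by
  obtain ⟨e, he1, he2⟩ := split_budget d s t
  refine ⟨e, fun i => e i - d i, by omega, ?_, fun i => by ring⟩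
  show (∑ i ∈ s, (e i - d i).natAbs) ≤ t
  have hgoal : (∑ i ∈ s, (e i - d i).natAbs) = ∑ i ∈ s, (d i - e i).natAbs :=
    Finset.sum_congr rfl fun i _ => by omega
  omega
theorem star_facts {k r : ℕ} {σ ρl : List ℤ} (hσ : permList k σ)
    (hρl : (↑ρl : Multiset ℤ) = Mkr k r) :
    permList (k + r) (starP σ ρl) ∧ restrictTo k (starP σ ρl) = σ ∧
      mapToZero k (starP σ ρl) = ρl := by
  have hcount : ρl.count 0 = σ.length := by rw [Mkr_count hρl, permList_length hσ]
  have hmemρ : ∀ x ∈ ρl, x = 0 ∨ (k:ℤ) < x := fun x hx => Mkr_mem hρl hx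
  have hmemσ : ∀ x ∈ σ, 1 ≤ x ∧ x ≤ (k:ℤ) := fun x hx => (permList_mem hσ).mp hx
  refine ⟨?_, restrictTo_starP _ _ _ hcount (fun x hx => (hmemσ x hx).2) hmemρ,
    mapToZero_starP _ _ _ hcount hmemσ hmemρ⟩
  rw [permList]
  have hperm := starP_perm ρl σ hcount
  have hρrep : (↑ρl : Multiset ℤ) = ↑(List.replicate k (0:ℤ) ++ rangeList (k+1) r) := by
    rw [hρl, Mkr, ← Multiset.coe_add, Multiset.coe_replicate]
  have hρperm : ρl.Perm (List.replicate k (0:ℤ) ++ rangeList (k+1) r) :=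
    Multiset.coe_eq_coe.mp hρrep
  have hfperm := hρperm.filter (fun x => x ≠ 0)
  have hfr : (List.replicate k (0:ℤ) ++ rangeList (k+1) r).filter (fun x => x ≠ 0)
      = rangeList (k+1) r := by
    rw [List.filter_append]
    have h1 : (List.replicate k (0:ℤ)).filter (fun x => x ≠ 0) = [] := by
      rw [List.filter_eq_nil_iff]
      intro a ha
      rw [List.eq_of_mem_replicate ha]
      simp
    have h2 : (rangeList (k+1) r).filter (fun x => x ≠ 0) = rangeList (k+1) r := by
      rw [List.filter_eq_self]
      intro a ha
      have := mem_rangeList.mp ha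
      simp only [ne_eq, decide_eq_true_eq]
      push_cast at this
      omega
    rw [h1, h2, List.nil_append]
  have hσperm : σ.Perm (rangeList 1 k) := Multiset.coe_eq_coe.mp hσ
  have : (starP σ ρl).Perm (rangeList 1 (k+r)) := by
    refine hperm.trans ?_
    rw [← rangeList_split k r]
    exact hσperm.append (hfperm.trans (by rw [hfr]))
  exact Multiset.coe_eq_coe.mpr this


/-- Theorem 5, main construction. Let `h 1, …, h (k-1)` and `M_t > 0` be
integers such that for every integer vector `e ∈ Z^{k-1}` of Manhattan weight at most `t`
the sums `∑_{i=1}^{k-1} e i · h i` are all distinct modulo `M_t`.  Assume there is a code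
`C_r ⊆ S(M_{k,r})` with minimum Kendall τ-distance `2t` containing distinct codewords
`ρ 0, ρ 1, …, ρ (M_t - 1)`.  Then the code
`C = {σ ∗ ρ j : σ ∈ S_k, ∑_{i=1}^{k-1} (ψ(σ))_{i+1} · h i ≡ j (mod M_t)} ⊆ S_{k+r}` is a
`(k+r, k)` systematic `t`-error-correcting code: every `σ ∈ S_k` is the restriction of
exactly one codeword, and distinct codewords are at Kendall τ-distance at least `2t+1`. -/
theorem stmt14 (k r t Mt : ℕ) (hMt : 0 < Mt) (h : ℕ → ℤ)
    (hdist : ∀ e e' : ℕ → ℤ,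
      (∑ i ∈ Finset.Icc 1 (k - 1), (e i).natAbs) ≤ t →
      (∑ i ∈ Finset.Icc 1 (k - 1), (e' i).natAbs) ≤ t →
      Int.ModEq (Mt : ℤ) (∑ i ∈ Finset.Icc 1 (k - 1), e i * h i)
        (∑ i ∈ Finset.Icc 1 (k - 1), e' i * h i) →
      ∀ i ∈ Finset.Icc 1 (k - 1), e i = e' i)
    (ρ : ℕ → List ℤ)
    (hρmem : ∀ j, j < Mt → (↑(ρ j) : Multiset ℤ) = Mkr k r)
    (hρ : ∀ j j', j < Mt → j' < Mt → j ≠ j' → ρ j ≠ ρ j' ∧ 2 * t ≤ dK (ρ j) (ρ j'))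
    (C : Set (List ℤ))
    (hC : C = {α : List ℤ | ∃ σ : List ℤ, permList k σ ∧
      α = starP σ (ρ (((∑ i ∈ Finset.Icc 1 (k - 1),
        (psiEntry σ ((i : ℤ) + 1) 0 : ℤ) * h i) % (Mt : ℤ)).toNat))}) :
    (∀ α ∈ C, permList (k + r) α) ∧
    (∀ σ : List ℤ, permList k σ → ∃! α, α ∈ C ∧ restrictTo k α = σ) ∧
    (∀ α ∈ C, ∀ β ∈ C, α ≠ β → 2 * t + 1 ≤ dK α β) := by
  subst hC
  have hJlt : ∀ X : ℤ, (X % (Mt:ℤ)).toNat < Mt := by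
    intro X
    have h0 : 0 ≤ X % (Mt:ℤ) := Int.emod_nonneg X (by exact_mod_cast hMt.ne')
    have h1 : X % (Mt:ℤ) < (Mt:ℤ) := Int.emod_lt_of_pos X (by exact_mod_cast hMt)
    omega
  have key : ∀ σ : List ℤ, permList k σ → ∀ j : ℕ, j < Mt →
      permList (k+r) (starP σ (ρ j)) ∧ restrictTo k (starP σ (ρ j)) = σ ∧
        mapToZero k (starP σ (ρ j)) = ρ j :=
    fun σ hσ j hj => star_facts hσ (hρmem j hj)
  refine ⟨?_, ?_, ?_⟩
  · -- part 1
    rintro α ⟨σ, hσ, rfl⟩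
    exact (key σ hσ _ (hJlt _)).1
  · -- part 2
    intro σ hσ
    refine ⟨starP σ (ρ (((∑ i ∈ Finset.Icc 1 (k - 1),
        (psiEntry σ ((i : ℤ) + 1) 0 : ℤ) * h i) % (Mt : ℤ)).toNat)),
      ⟨⟨σ, hσ, rfl⟩, (key σ hσ _ (hJlt _)).2.1⟩, ?_⟩
    rintro β ⟨⟨σ', hσ', rfl⟩, hres⟩
    have : σ' = σ := by rw [← hres, (key σ' hσ' _ (hJlt _)).2.1]
    subst this
    rfl
  · -- part 3
    rintro α ⟨σ, hσ, rfl⟩ β ⟨σ', hσ', rfl⟩ hne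
    have hσne : σ ≠ σ' := by
      intro hcc; subst hcc; exact hne rfl
    obtain ⟨hP, hR, hZ⟩ := key σ hσ _ (hJlt _)
    obtain ⟨hP', hR', hZ'⟩ := key σ' hσ' _ (hJlt _)
    apply le_dK (perm_of_permList hP hP')
    intro n hn
    have hpos : ∀ x ∈ starP σ (ρ (((∑ i ∈ Finset.Icc 1 (k - 1),
        (psiEntry σ ((i : ℤ) + 1) 0 : ℤ) * h i) % (Mt : ℤ)).toNat)), 1 ≤ x := by
      intro x hx
      have := (permList_mem hP).mp hx
      omega
    obtain ⟨m₁, m₂, hm, h1, h2⟩ := proj_steps hpos hn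
    rw [hR, hR'] at h1
    rw [hZ, hZ'] at h2
    by_cases hJ : (((∑ i ∈ Finset.Icc 1 (k - 1),
          (psiEntry σ ((i : ℤ) + 1) 0 : ℤ) * h i) % (Mt : ℤ)).toNat)
        = (((∑ i ∈ Finset.Icc 1 (k - 1),
          (psiEntry σ' ((i : ℤ) + 1) 0 : ℤ) * h i) % (Mt : ℤ)).toNat)
    · -- same codeword of C_r : use the Manhattan ψ argument
      have hM : 2*t+1 ≤ ∑ i ∈ Finset.Icc 1 (k-1),
          ((psiEntry σ ((i:ℤ)+1) 0 : ℤ) - (psiEntry σ' ((i:ℤ)+1) 0 : ℤ)).natAbs := by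
        by_contra hle
        push_neg at hle
        obtain ⟨e, e', he, he', hee⟩ := split_two t
          (fun i => (psiEntry σ ((i:ℤ)+1) 0 : ℤ) - (psiEntry σ' ((i:ℤ)+1) 0 : ℤ))
          (Finset.Icc 1 (k-1)) (by beta_reduce; omega)
        have hXY : Int.ModEq (Mt:ℤ)
            (∑ i ∈ Finset.Icc 1 (k - 1), (psiEntry σ ((i : ℤ) + 1) 0 : ℤ) * h i)
            (∑ i ∈ Finset.Icc 1 (k - 1), (psiEntry σ' ((i : ℤ) + 1) 0 : ℤ) * h i) := by
          have h0 : 0 ≤ (∑ i ∈ Finset.Icc 1 (k - 1),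
              (psiEntry σ ((i : ℤ) + 1) 0 : ℤ) * h i) % (Mt:ℤ) :=
            Int.emod_nonneg _ (by exact_mod_cast hMt.ne')
          have h0' : 0 ≤ (∑ i ∈ Finset.Icc 1 (k - 1),
              (psiEntry σ' ((i : ℤ) + 1) 0 : ℤ) * h i) % (Mt:ℤ) :=
            Int.emod_nonneg _ (by exact_mod_cast hMt.ne')
          show _ % _ = _ % _
          omega
        have hsub : (∑ i ∈ Finset.Icc 1 (k-1), e i * h i)
            - (∑ i ∈ Finset.Icc 1 (k-1), e' i * h i)
            = (∑ i ∈ Finset.Icc 1 (k - 1), (psiEntry σ ((i : ℤ) + 1) 0 : ℤ) * h i)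
            - (∑ i ∈ Finset.Icc 1 (k - 1), (psiEntry σ' ((i : ℤ) + 1) 0 : ℤ) * h i) := by
          rw [← Finset.sum_sub_distrib, ← Finset.sum_sub_distrib]
          apply Finset.sum_congr rfl
          intro i _
          have := hee i
          calc e i * h i - e' i * h i = (e i - e' i) * h i := by ring
            _ = _ := by rw [this]; ring
        have hcong : Int.ModEq (Mt:ℤ) (∑ i ∈ Finset.Icc 1 (k-1), e i * h i)
            (∑ i ∈ Finset.Icc 1 (k-1), e' i * h i) := by
          rw [Int.modEq_iff_dvd] at hXY ⊢
          have hYX : (∑ i ∈ Finset.Icc 1 (k-1), e' i * h i)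
              - (∑ i ∈ Finset.Icc 1 (k-1), e i * h i)
              = (∑ i ∈ Finset.Icc 1 (k - 1), (psiEntry σ' ((i : ℤ) + 1) 0 : ℤ) * h i)
              - (∑ i ∈ Finset.Icc 1 (k - 1), (psiEntry σ ((i : ℤ) + 1) 0 : ℤ) * h i) := by
            omega
          rw [hYX]
          exact hXY
        have heq := hdist e e' he he' hcong
        apply hσne
        apply psi_inj k σ σ' hσ hσ'
        intro v h2v hvk
        set i : ℕ := (v - 1).toNat with hi
        have hiIcc : i ∈ Finset.Icc 1 (k-1) := by
          rw [Finset.mem_Icc]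
          omega
        have hd0 : e i - e' i = 0 := by rw [heq i hiIcc]; ring
        have := hee i
        rw [hd0] at this
        have hv : ((i:ℤ)+1) = v := by omega
        rw [← hv]
        omega
      have hMle := psi_manhattan_le k (permList_nodup hσ) h1
      omega
    · -- different codewords of C_r
      have hd2 : 2*t ≤ m₂ := le_trans (hρ _ _ (hJlt _) (hJlt _) hJ).2 (dK_le h2)
      have hd1 : 1 ≤ m₁ := by
        rcases Nat.eq_zero_or_pos m₁ with h0 | h0
        · subst h0
          have : σ = σ' := h1
          subst this
          exact absurd rfl hJ
        · exact h0
      omega
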